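/- arXiv:1705.08435 — 3 statements merged into one kernel-verified Lean document; each statement's English description precedes it below -/
import Mathlib

section
/- Randomized block coordinate descent with uniform block sampling on a σ-strongly convex function f with block Lipschitz constants bounded by L_max satisfies, in expectation over the random block choices, E[f(x_T)] - f⋆ ≤ (1 - σ/(n·L_max))^T · (f(x₀) - f⋆). -/
open scoped RealInnerProductSpace BigOperators


section aux
variable {E : Type*} [NormedAddCommGroup E] [InnerProductSpace ℝ E] [CompleteSpace E]

lemma quad_upper_bound (g : E → ℝ) (g' : E → E)
    (hg : ∀ θ, HasGradientAt g (g' θ) θ) (Lc : ℝ)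
    (hlip : ∀ a b, ‖g' b - g' a‖ ≤ Lc * ‖b - a‖) (x y : E) :
    g y ≤ g x + ⟪g' x, y - x⟫ + Lc / 2 * ‖y - x‖ ^ 2 := by
  set d := y - x with hd
  set ψ : ℝ → ℝ := fun s => g (x + s • d) - s * ⟪g' x, d⟫ - Lc / 2 * s ^ 2 * ‖d‖ ^ 2 with hψ
  have hderiv : ∀ s : ℝ, HasDerivAt ψ (⟪g' (x + s • d), d⟫ - ⟪g' x, d⟫ - Lc * s * ‖d‖ ^ 2) s := by
    intro s
    have hline : HasDerivAt (fun s : ℝ => x + s • d) d s := by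
      simpa using ((hasDerivAt_id s).smul_const d).const_add x
    have h1 : HasDerivAt (fun s : ℝ => g (x + s • d)) ⟪g' (x + s • d), d⟫ s := by
      have := (hg (x + s • d)).hasFDerivAt.comp_hasDerivAt s hline
      simp at this
      exact this
    have h2 : HasDerivAt (fun s : ℝ => s * ⟪g' x, d⟫) ⟪g' x, d⟫ s := by
      simpa using (hasDerivAt_id s).mul_const ⟪g' x, d⟫
    have h3 : HasDerivAt (fun s : ℝ => Lc / 2 * s ^ 2 * ‖d‖ ^ 2) (Lc * s * ‖d‖ ^ 2) s := by
      have h4 := ((hasDerivAt_pow 2 s).const_mul (Lc / 2)).mul_const (‖d‖ ^ 2)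
      exact h4.congr_deriv (by ring)
    exact (h1.sub h2).sub h3
  have hanti : AntitoneOn ψ (Set.Icc (0:ℝ) 1) := by
    apply antitoneOn_of_deriv_nonpos (convex_Icc 0 1)
    · exact fun s _ => ((hderiv s).continuousAt).continuousWithinAt
    · intro s _
      exact ((hderiv s).differentiableAt).differentiableWithinAt
    · intro s hs
      rw [interior_Icc] at hs
      rw [(hderiv s).deriv]
      have hinner : ⟪g' (x + s • d), d⟫ - ⟪g' x, d⟫ ≤ Lc * s * ‖d‖ ^ 2 := by
        have h1 : ⟪g' (x + s • d) - g' x, d⟫ ≤ ‖g' (x + s • d) - g' x‖ * ‖d‖ :=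
          real_inner_le_norm _ _
        have h2 : ‖g' (x + s • d) - g' x‖ ≤ Lc * ‖(x + s • d) - x‖ := hlip _ _
        have h3 : ‖(x + s • d) - x‖ = s * ‖d‖ := by
          rw [add_sub_cancel_left, norm_smul, Real.norm_eq_abs, abs_of_pos hs.1]
        rw [inner_sub_left] at h1
        rw [h3] at h2
        have h4 := mul_le_mul_of_nonneg_right h2 (norm_nonneg d)
        nlinarith [h4]
      linarith
  have h01 : ψ 1 ≤ ψ 0 := hanti (Set.left_mem_Icc.2 zero_le_one) (Set.right_mem_Icc.2 zero_le_one) zero_le_one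
  have hψ0 : ψ 0 = g x := by simp [hψ]
  have hψ1 : ψ 1 = g y - ⟪g' x, d⟫ - Lc / 2 * ‖d‖ ^ 2 := by
    simp [hψ, hd]
  rw [hψ0, hψ1] at h01
  linarith

lemma sum_update_eq {T n : ℕ} (t : Fin T) (F : (Fin T → Fin n) → ℝ) :
    ∑ i : Fin n, ∑ ω : Fin T → Fin n, F (Function.update ω t i) =
      (n : ℝ) * ∑ ω : Fin T → Fin n, F ω := by
  classical
  let Φ : ((Fin T → Fin n) × Fin n) ≃ ((Fin T → Fin n) × Fin n) :=
    { toFun := fun q => (Function.update q.1 t q.2, q.1 t)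
      invFun := fun q => (Function.update q.1 t q.2, q.1 t)
      left_inv := fun q => by
        cases q with
        | mk ω i => simp [Function.update_idem]
      right_inv := fun q => by
        cases q with
        | mk ω i => simp [Function.update_idem] }
  calc ∑ i : Fin n, ∑ ω : Fin T → Fin n, F (Function.update ω t i)
      = ∑ q : ((Fin T → Fin n) × Fin n), F (Function.update q.1 t q.2) := by
        rw [Fintype.sum_prod_type]
        exact Finset.sum_comm
    _ = ∑ q : ((Fin T → Fin n) × Fin n), F q.1 := Φ.sum_comp (fun q => F q.1)
    _ = (n : ℝ) * ∑ ω : Fin T → Fin n, F ω := by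
        rw [Fintype.sum_prod_type]
        simp [Finset.sum_const, Finset.mul_sum]
end aux

/-- Linear convergence (in expectation) of randomized block coordinate descent with
uniform block sampling on a σ-strongly convex function:
`E[f(x_T)] - f⋆ ≤ (1 - σ/(n L_max))^T (f(x₀) - f⋆)`.
The expectation is the uniform average over all sequences of block choices. -/
theorem randomized_bcd_linear_convergence
    {n p : ℕ} (hn : 0 < n)
    (f : (Fin n → EuclideanSpace ℝ (Fin p)) → ℝ)
    (G : (Fin n → EuclideanSpace ℝ (Fin p)) → Fin n → EuclideanSpace ℝ (Fin p))
    (hgrad : ∀ x i, HasGradientAt (fun θ => f (Function.update x i θ)) (G x i) (x i))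
    (σ : ℝ) (hσ : 0 < σ)
    -- σ-strong convexity of f (with full gradient given blockwise):
    (hsc : ∀ x y, f y ≥ f x + (∑ i, ⟪G x i, y i - x i⟫) + σ / 2 * ∑ i, ‖y i - x i‖ ^ 2)
    (L : Fin n → ℝ) (hLpos : ∀ i, 0 < L i)
    (hlip : ∀ x (i : Fin n) (h : EuclideanSpace ℝ (Fin p)),
      ‖G (Function.update x i (x i + h)) i - G x i‖ ≤ L i * ‖h‖)
    (Lmax : ℝ) (hLmax : ∀ i, L i ≤ Lmax)
    (fstar : ℝ) (xstar : Fin n → EuclideanSpace ℝ (Fin p))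
    (hfstar : f xstar = fstar) (hmin : ∀ y, fstar ≤ f y)
    (T : ℕ) (x0 : Fin n → EuclideanSpace ℝ (Fin p))
    -- trajectory driven by a sequence of block choices ω:
    (xseq : (Fin T → Fin n) → Fin (T + 1) → (Fin n → EuclideanSpace ℝ (Fin p)))
    (h0 : ∀ ω, xseq ω 0 = x0)
    (hstep : ∀ ω (t : Fin T),
      xseq ω t.succ =
        Function.update (xseq ω t.castSucc) (ω t)
          (xseq ω t.castSucc (ω t) - (1 / L (ω t)) • G (xseq ω t.castSucc) (ω t))) :
    (∑ ω : Fin T → Fin n, f (xseq ω (Fin.last T))) / (n : ℝ) ^ T - fstar ≤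
      (1 - σ / (n * Lmax)) ^ T * (f x0 - fstar) := by
  classical
  have hnR : (0:ℝ) < (n:ℝ) := by exact_mod_cast hn
  have hLmaxpos : 0 < Lmax := lt_of_lt_of_le (hLpos ⟨0, hn⟩) (hLmax ⟨0, hn⟩)
  -- block gradient of the restricted function
  have hbgrad : ∀ (x : Fin n → EuclideanSpace ℝ (Fin p)) (i : Fin n)
      (θ : EuclideanSpace ℝ (Fin p)),
      HasGradientAt (fun θ' => f (Function.update x i θ'))
        (G (Function.update x i θ) i) θ := by
    intro x i θ
    have h := hgrad (Function.update x i θ) i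
    simpa [Function.update_idem] using h
  -- Lipschitz gradient of the restricted function
  have hblip : ∀ (x : Fin n → EuclideanSpace ℝ (Fin p)) (i : Fin n)
      (a b : EuclideanSpace ℝ (Fin p)),
      ‖G (Function.update x i b) i - G (Function.update x i a) i‖ ≤ L i * ‖b - a‖ := by
    intro x i a b
    have h := hlip (Function.update x i a) i (b - a)
    simpa [Function.update_idem] using h
  -- descent lemma for one block step
  have hdescent : ∀ x (i : Fin n),
      f (Function.update x i (x i - (1 / L i) • G x i)) ≤
        f x - 1 / (2 * L i) * ‖G x i‖ ^ 2 := by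
    intro x i
    have hL := hLpos i
    have hq := quad_upper_bound (fun θ' => f (Function.update x i θ'))
      (fun θ => G (Function.update x i θ) i) (hbgrad x i) (L i) (hblip x i)
      (x i) (x i - (1 / L i) • G x i)
    simp only [Function.update_eq_self, sub_sub_cancel_left, inner_neg_right,
      real_inner_smul_right, real_inner_self_eq_norm_sq, norm_neg, norm_smul,
      Real.norm_eq_abs] at hq
    have habs : |1 / L i| = 1 / L i := abs_of_pos (by positivity)
    rw [habs] at hq
    have hkey : f x + -(1 / L i * ‖G x i‖ ^ 2) + L i / 2 * (1 / L i * ‖G x i‖) ^ 2 =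
        f x - 1 / (2 * L i) * ‖G x i‖ ^ 2 := by
      field_simp
      ring
    linarith [hq, hkey.le, hkey.ge]
  -- PL inequality from strong convexity
  have hPL : ∀ x, 2 * σ * (f x - fstar) ≤ ∑ i, ‖G x i‖ ^ 2 := by
    intro x
    have h := hsc x xstar
    rw [hfstar] at h
    have hterm : ∀ i : Fin n, -(1 / (2 * σ)) * ‖G x i‖ ^ 2 ≤
        ⟪G x i, xstar i - x i⟫ + σ / 2 * ‖xstar i - x i‖ ^ 2 := by
      intro i
      have h0 : (0:ℝ) ≤ σ / 2 * ‖(xstar i - x i) + σ⁻¹ • G x i‖ ^ 2 := by positivity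
      rw [norm_add_sq_real, real_inner_smul_right, norm_smul, Real.norm_eq_abs,
        abs_of_pos (inv_pos.2 hσ), real_inner_comm] at h0
      have hσ' : σ ≠ 0 := ne_of_gt hσ
      have hexp : σ / 2 * (‖xstar i - x i‖ ^ 2 + 2 * (σ⁻¹ * ⟪G x i, xstar i - x i⟫) +
          (σ⁻¹ * ‖G x i‖) ^ 2) =
          σ / 2 * ‖xstar i - x i‖ ^ 2 + ⟪G x i, xstar i - x i⟫ +
            1 / (2 * σ) * ‖G x i‖ ^ 2 := by
        field_simp
      rw [hexp] at h0
      linarith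
    have hsum := Finset.sum_le_sum (fun i (_ : i ∈ Finset.univ) => hterm i)
    have hs1 : ∑ i : Fin n, (⟪G x i, xstar i - x i⟫ + σ / 2 * ‖xstar i - x i‖ ^ 2) =
        (∑ i, ⟪G x i, xstar i - x i⟫) + σ / 2 * ∑ i, ‖xstar i - x i‖ ^ 2 := by
      rw [Finset.sum_add_distrib, Finset.mul_sum]
    have hs2 : ∑ i : Fin n, -(1 / (2 * σ)) * ‖G x i‖ ^ 2 =
        -(1 / (2 * σ)) * ∑ i, ‖G x i‖ ^ 2 := by
      rw [Finset.mul_sum]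
    rw [hs1, hs2] at hsum
    have h3 : f x - fstar ≤ (∑ i, ‖G x i‖ ^ 2) / (2 * σ) := by
      rw [div_eq_mul_inv]
      have heq : 1 / (2 * σ) * ∑ i, ‖G x i‖ ^ 2 = (∑ i, ‖G x i‖ ^ 2) * (2 * σ)⁻¹ := by
        rw [one_div]; ring
      linarith [hsum, h, heq]
    rw [le_div_iff₀ (by positivity)] at h3
    linarith
  -- expected decrease per point
  have hsumx : ∀ x : Fin n → EuclideanSpace ℝ (Fin p),
      ∑ i : Fin n, (f (Function.update x i (x i - (1 / L i) • G x i)) - fstar) ≤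
        ((n:ℝ) - σ / Lmax) * (f x - fstar) := by
    intro x
    have h1 : ∀ i : Fin n,
        f (Function.update x i (x i - (1 / L i) • G x i)) - fstar ≤
          (f x - fstar) - 1 / (2 * Lmax) * ‖G x i‖ ^ 2 := by
      intro i
      have hd := hdescent x i
      have h2 : 1 / (2 * Lmax) * ‖G x i‖ ^ 2 ≤ 1 / (2 * L i) * ‖G x i‖ ^ 2 := by
        apply mul_le_mul_of_nonneg_right _ (sq_nonneg _)
        apply one_div_le_one_div_of_le (by linarith [hLpos i])
        linarith [hLmax i]
      linarith
    have h2 := Finset.sum_le_sum (fun i (_ : i ∈ Finset.univ) => h1 i)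
    have h3 : ∑ i : Fin n, ((f x - fstar) - 1 / (2 * Lmax) * ‖G x i‖ ^ 2) =
        (n:ℝ) * (f x - fstar) - 1 / (2 * Lmax) * ∑ i, ‖G x i‖ ^ 2 := by
      rw [Finset.sum_sub_distrib, Finset.sum_const, Finset.card_univ, Fintype.card_fin,
        ← Finset.mul_sum, nsmul_eq_mul]
    have h5 : 1 / (2 * Lmax) * (2 * σ * (f x - fstar)) ≤
        1 / (2 * Lmax) * ∑ i, ‖G x i‖ ^ 2 :=
      mul_le_mul_of_nonneg_left (hPL x) (by positivity)
    have h6 : 1 / (2 * Lmax) * (2 * σ * (f x - fstar)) = σ / Lmax * (f x - fstar) := by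
      field_simp
    have h7 : ((n:ℝ) - σ / Lmax) * (f x - fstar) =
        (n:ℝ) * (f x - fstar) - σ / Lmax * (f x - fstar) := by ring
    rw [h3] at h2
    rw [h6] at h5
    rw [h7]
    linarith
  -- iterates only depend on the prefix of the choice sequence
  have hprefix : ∀ (t : Fin (T + 1)) (ω ω' : Fin T → Fin n),
      (∀ s : Fin T, (s : ℕ) < (t : ℕ) → ω s = ω' s) → xseq ω t = xseq ω' t := by
    intro t
    induction t using Fin.induction with
    | zero => intro ω ω' _; rw [h0, h0]
    | succ u ih =>
      intro ω ω' hag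
      have h1 : ω u = ω' u := hag u (by simp only [Fin.val_succ]; omega)
      have h2 : xseq ω u.castSucc = xseq ω' u.castSucc := by
        apply ih
        intro s hs
        apply hag
        simp only [Fin.coe_castSucc] at hs
        simp only [Fin.val_succ]
        omega
      rw [hstep ω u, hstep ω' u, h1, h2]
  -- one step rewritten with a modified choice sequence
  have hterm : ∀ (t : Fin T) (ω : Fin T → Fin n) (i : Fin n),
      xseq (Function.update ω t i) t.succ =
        Function.update (xseq ω t.castSucc) i
          (xseq ω t.castSucc i - (1 / L i) • G (xseq ω t.castSucc) i) := by
    intro t ω i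
    have hpre : xseq (Function.update ω t i) t.castSucc = xseq ω t.castSucc := by
      apply hprefix
      intro s hs
      simp only [Fin.coe_castSucc] at hs
      exact Function.update_of_ne (Fin.ne_of_val_ne (Nat.ne_of_lt hs)) i ω
    rw [hstep (Function.update ω t i) t, hpre, Function.update_self]
  -- expected value process
  set Sfun : Fin (T + 1) → ℝ := fun t => ∑ ω : Fin T → Fin n, (f (xseq ω t) - fstar)
    with hSdef
  have hSnonneg : ∀ t, 0 ≤ Sfun t := fun t =>
    Finset.sum_nonneg fun ω _ => sub_nonneg.2 (hmin _)
  set ρ := σ / ((n:ℝ) * Lmax) with hρdef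
  have hkey : ∀ t : Fin T, (n:ℝ) * Sfun t.succ ≤ ((n:ℝ) - σ / Lmax) * Sfun t.castSucc := by
    intro t
    have e1 : (n:ℝ) * Sfun t.succ =
        ∑ i : Fin n, ∑ ω : Fin T → Fin n, (f (xseq (Function.update ω t i) t.succ) - fstar) :=
      (sum_update_eq t fun ω => f (xseq ω t.succ) - fstar).symm
    rw [e1]
    rw [Finset.sum_comm]
    have e2 : ∀ ω : Fin T → Fin n,
        ∑ i : Fin n, (f (xseq (Function.update ω t i) t.succ) - fstar) ≤
          ((n:ℝ) - σ / Lmax) * (f (xseq ω t.castSucc) - fstar) := by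
      intro ω
      have := hsumx (xseq ω t.castSucc)
      calc ∑ i : Fin n, (f (xseq (Function.update ω t i) t.succ) - fstar)
          = ∑ i : Fin n, (f (Function.update (xseq ω t.castSucc) i
              (xseq ω t.castSucc i - (1 / L i) • G (xseq ω t.castSucc) i)) - fstar) := by
            refine Finset.sum_congr rfl fun i _ => ?_
            rw [hterm t ω i]
        _ ≤ ((n:ℝ) - σ / Lmax) * (f (xseq ω t.castSucc) - fstar) := this
    calc ∑ ω : Fin T → Fin n, ∑ i : Fin n, (f (xseq (Function.update ω t i) t.succ) - fstar)
        ≤ ∑ ω : Fin T → Fin n, ((n:ℝ) - σ / Lmax) * (f (xseq ω t.castSucc) - fstar) :=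
          Finset.sum_le_sum fun ω _ => e2 ω
      _ = ((n:ℝ) - σ / Lmax) * Sfun t.castSucc := by rw [hSdef, ← Finset.mul_sum]
  have hrel : (n:ℝ) * (1 - ρ) = (n:ℝ) - σ / Lmax := by
    rw [hρdef]
    field_simp
  have hstepS : ∀ t : Fin T, Sfun t.succ ≤ (1 - ρ) * Sfun t.castSucc := by
    intro t
    have h1 := hkey t
    rw [← hrel, mul_assoc] at h1
    exact le_of_mul_le_mul_left h1 hnR
  have hS0 : Sfun 0 = (n:ℝ) ^ T * (f x0 - fstar) := by
    rw [hSdef]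
    simp only [h0]
    rw [Finset.sum_const, Finset.card_univ, Fintype.card_fun, Fintype.card_fin,
      Fintype.card_fin, nsmul_eq_mul]
    push_cast
    ring
  have hboth : ∀ t : Fin (T + 1), Sfun t ≤ (1 - ρ) ^ (t : ℕ) * ((n:ℝ) ^ T * (f x0 - fstar)) := by
    rcases eq_or_lt_of_le (hmin x0) with hΔ | hΔ
    · -- f x0 = fstar : everything is zero
      have hz : ∀ t : Fin (T + 1), Sfun t ≤ 0 := by
        intro t
        induction t using Fin.induction with
        | zero => rw [hS0, ← hΔ]; simp
        | succ u ih =>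
          have h1 := hstepS u
          have h2 : Sfun u.castSucc = 0 := le_antisymm ih (hSnonneg _)
          rw [h2, mul_zero] at h1
          exact h1
      intro t
      rw [← hΔ]
      simpa using hz t
    · -- fstar < f x0, hence σ ≤ Lmax
      have hσLmax : σ ≤ Lmax := by
        have hne : x0 ≠ xstar := by
          intro he
          rw [he, hfstar] at hΔ
          exact lt_irrefl _ hΔ
        obtain ⟨i, hi⟩ := Function.ne_iff.1 hne
        have hdne : xstar i - x0 i ≠ 0 := sub_ne_zero.2 (Ne.symm hi)
        have hlow := hsc x0 (Function.update x0 i (xstar i))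
        have hsum1 : ∑ j, ⟪G x0 j, Function.update x0 i (xstar i) j - x0 j⟫ =
            ⟪G x0 i, xstar i - x0 i⟫ := by
          rw [Finset.sum_eq_single i]
          · rw [Function.update_self]
          · intro j _ hj
            rw [Function.update_of_ne hj]
            simp
          · intro hmem
            exact absurd (Finset.mem_univ i) hmem
        have hsum2 : ∑ j, ‖Function.update x0 i (xstar i) j - x0 j‖ ^ 2 =
            ‖xstar i - x0 i‖ ^ 2 := by
          rw [Finset.sum_eq_single i]
          · rw [Function.update_self]
          · intro j _ hj
            rw [Function.update_of_ne hj]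
            simp
          · intro hmem
            exact absurd (Finset.mem_univ i) hmem
        have hup := quad_upper_bound (fun θ' => f (Function.update x0 i θ'))
          (fun θ => G (Function.update x0 i θ) i) (hbgrad x0 i) (L i) (hblip x0 i)
          (x0 i) (xstar i)
        simp only [Function.update_eq_self] at hup
        rw [hsum1, hsum2] at hlow
        have hnorm : 0 < ‖xstar i - x0 i‖ ^ 2 :=
          pow_pos (norm_pos_iff.2 hdne) 2
        nlinarith [hLmax i, hup, hlow, hnorm]
      have hρ1 : 0 ≤ 1 - ρ := by
        rw [hρdef, sub_nonneg]
        apply div_le_one_of_le₀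
        · have h1 : (1:ℝ) ≤ (n:ℝ) := by exact_mod_cast hn
          nlinarith [hLmaxpos]
        · positivity
      intro t
      induction t using Fin.induction with
      | zero => rw [hS0]; simp
      | succ u ih =>
        calc Sfun u.succ ≤ (1 - ρ) * Sfun u.castSucc := hstepS u
          _ ≤ (1 - ρ) * ((1 - ρ) ^ (u.castSucc : ℕ) * ((n:ℝ) ^ T * (f x0 - fstar))) :=
            mul_le_mul_of_nonneg_left ih hρ1
          _ = (1 - ρ) ^ ((u.succ : Fin (T+1)) : ℕ) * ((n:ℝ) ^ T * (f x0 - fstar)) := by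
            simp only [Fin.coe_castSucc, Fin.val_succ]
            ring
  -- conclude
  have hfin := hboth (Fin.last T)
  simp only [Fin.val_last] at hfin
  have hSlast : Sfun (Fin.last T) =
      (∑ ω : Fin T → Fin n, f (xseq ω (Fin.last T))) - (n:ℝ) ^ T * fstar := by
    simp only [hSdef]
    rw [Finset.sum_sub_distrib, Finset.sum_const, Finset.card_univ, Fintype.card_fun,
      Fintype.card_fin, Fintype.card_fin, nsmul_eq_mul]
    push_cast
    ring
  have hnpow : (0:ℝ) < (n:ℝ) ^ T := pow_pos hnR T
  rw [sub_le_iff_le_add, div_le_iff₀ hnpow]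
  have hring : ((1 - ρ) ^ T * (f x0 - fstar) + fstar) * (n:ℝ) ^ T =
      (1 - ρ) ^ T * ((n:ℝ) ^ T * (f x0 - fstar)) + (n:ℝ) ^ T * fstar := by ring
  rw [hring]
  linarith [hfin, hSlast.le, hSlast.ge]
end

section
/- The L¹-sensitivity of one block coordinate descent update is at most 2μcᵢD_{ii}L₀/(mᵢLᵢ): for two neighboring datasets of agent i, the published iterates Θᵢ(t+1) computed from the same Θ(t) differ in L¹-norm by at most 2μcᵢD_{ii}L₀/(mᵢLᵢ). -/
open scoped BigOperators

/-- L¹-sensitivity of one block coordinate descent update: for two neighboring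
datasets of agent `i`, the published iterates `Θᵢ(t+1)` computed from the same
current state differ in L¹-norm by at most `2μcᵢD_{ii}L₀/(mᵢLᵢ)`. -/
theorem bcd_update_l1_sensitivity
    {p n : ℕ} {Z : Type*} (m : ℕ) (hm : 0 < m)
    (μ c Lloc Dii L₀ lam : ℝ)
    (hμ : 0 < μ) (hc : 0 < c) (hLloc : 0 < Lloc) (hD : 0 < Dii) (hL₀ : 0 ≤ L₀)
    (Li : ℝ) (hLi : Li = Dii * (1 + μ * c * Lloc))
    (W : Fin n → ℝ) (hW : ∀ j, 0 ≤ W j) (hWsum : ∑ j, W j = Dii)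
    (ℓ : Z → EuclideanSpace ℝ (Fin p) → ℝ)
    (gℓ : Z → EuclideanSpace ℝ (Fin p) → EuclideanSpace ℝ (Fin p))
    (hgrad : ∀ z θ, HasGradientAt (ℓ z) (gℓ z θ) θ)
    -- L₀-Lipschitzness of ℓ(·;x,y) w.r.t. ‖·‖₁ gives the dual bound ‖∇ℓ‖₁ ≤ L₀:
    (hbound : ∀ z θ, ∑ i, |gℓ z θ i| ≤ L₀)
    (S₁ S₂ : Fin m → Z)
    (hneighbor : ∃ k₀ : Fin m, ∀ k, k ≠ k₀ → S₁ k = S₂ k)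
    (Θ : Fin n → EuclideanSpace ℝ (Fin p))  -- all current models Θ(t)
    (θ : EuclideanSpace ℝ (Fin p))          -- agent i's current model Θᵢ(t)
    -- regularized empirical loss gradients for the two datasets:
    (g₁ g₂ : EuclideanSpace ℝ (Fin p))
    (hg₁ : g₁ = ((1 : ℝ) / m) • (∑ k, gℓ (S₁ k) θ) + (2 * lam) • θ)
    (hg₂ : g₂ = ((1 : ℝ) / m) • (∑ k, gℓ (S₂ k) θ) + (2 * lam) • θ)
    -- updates Θᵢ(t+1) = Θᵢ(t) - (1/Lᵢ)[∇Q(Θ(t))]ᵢ for the two datasets: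
    (upd₁ upd₂ : EuclideanSpace ℝ (Fin p))
    (hupd₁ : upd₁ = θ - (1 / Li) • (Dii • (θ + (μ * c) • g₁) - ∑ j, W j • Θ j))
    (hupd₂ : upd₂ = θ - (1 / Li) • (Dii • (θ + (μ * c) • g₂) - ∑ j, W j • Θ j)) :
    ∑ i, |(upd₁ - upd₂) i| ≤ 2 * μ * c * Dii * L₀ / (m * Li) := by

  obtain ⟨k₀, hk₀⟩ := hneighbor
  have hLipos : 0 < Li := by
    rw [hLi]; positivity
  have hmpos : (0:ℝ) < m := by exact_mod_cast hm
  set u := gℓ (S₁ k₀) θ with hu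
  set v := gℓ (S₂ k₀) θ with hv
  have hsum : (∑ k, gℓ (S₁ k) θ) - (∑ k, gℓ (S₂ k) θ) = u - v := by
    rw [← Finset.sum_sub_distrib]
    rw [Finset.sum_eq_single_of_mem k₀ (Finset.mem_univ _)]
    intro b _ hb
    rw [hk₀ b hb, sub_self]
  set a : ℝ := Dii * μ * c / (Li * m) with ha
  have hapos : 0 < a := by positivity
  have hdiff : upd₁ - upd₂ = (-a) • (u - v) := by
    have h1 : upd₁ - upd₂ = (-(1/Li * (Dii * ((μ*c) * (1/m))))) •
        ((∑ k, gℓ (S₁ k) θ) - (∑ k, gℓ (S₂ k) θ)) := by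
      rw [hupd₁, hupd₂, hg₁, hg₂]
      simp only [smul_add, smul_sub, smul_smul, sub_smul, neg_smul]
      abel
    rw [h1, hsum]
    congr 1
    rw [ha]
    field_simp
  have hcomp : ∀ i, |(upd₁ - upd₂) i| = a * |u i - v i| := by
    intro i
    rw [hdiff]
    have : ((-a) • (u - v)) i = -a * (u i - v i) := rfl
    rw [this, abs_mul, abs_neg, abs_of_pos hapos]
  calc ∑ i, |(upd₁ - upd₂) i| = a * ∑ i, |u i - v i| := by
        rw [Finset.mul_sum]; exact Finset.sum_congr rfl (fun i _ => hcomp i)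
    _ ≤ a * (2 * L₀) := by
        apply mul_le_mul_of_nonneg_left _ hapos.le
        calc ∑ i, |u i - v i| ≤ ∑ i, (|u i| + |v i|) :=
              Finset.sum_le_sum (fun i _ => abs_sub _ _)
          _ = (∑ i, |u i|) + (∑ i, |v i|) := Finset.sum_add_distrib
          _ ≤ L₀ + L₀ := add_le_add (hbound _ _) (hbound _ _)
          _ = 2 * L₀ := by ring
    _ = 2 * μ * c * Dii * L₀ / (m * Li) := by
        rw [ha]; field_simp
end

section
/- Optimal noise allocation: for fixed A > 0, C ∈ (0,1), T ≥ 1 and budget ε̄ > 0, the minimizer of F(ε₀,…,ε_{T-1}) = Σ_{t=0}^{T-1} A²·C^t/ε_t² over positive ε_t with Σ_t ε_t = ε̄ is ε_t* = ((C^{1/3} - 1)/(C^{T/3} - 1))·C^{t/3}·ε̄. -/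
open scoped BigOperators
open Real

private lemma tangent_ineq (a x y : ℝ) (ha : 0 ≤ a) (hx : 0 < x) (hy : 0 < y) :
    3 * (a / y ^ 2) - 2 * (a / y ^ 3) * x ≤ a / x ^ 2 := by
  have hxne : x ≠ 0 := ne_of_gt hx
  have hyne : y ≠ 0 := ne_of_gt hy
  have e1 : (3 * (a / y ^ 2) - 2 * (a / y ^ 3) * x) * (x ^ 2 * y ^ 3)
      = 3 * a * x ^ 2 * y - 2 * a * x ^ 3 := by
    field_simp
  have e2 : (a / x ^ 2) * (x ^ 2 * y ^ 3) = a * y ^ 3 := by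
    field_simp
  have key : (3 * (a / y ^ 2) - 2 * (a / y ^ 3) * x) * (x ^ 2 * y ^ 3)
      ≤ (a / x ^ 2) * (x ^ 2 * y ^ 3) := by
    rw [e1, e2]
    nlinarith [mul_nonneg ha (mul_nonneg (sq_nonneg (x - y)) (by linarith : (0:ℝ) ≤ 2 * x + y))]
  exact le_of_mul_le_mul_right key (by positivity)

/-- Optimal noise allocation: for fixed `A > 0`, `C ∈ (0,1)`, `T ≥ 1` and budget
`ε̄ > 0`, the minimizer of `F(ε) = Σ_t A² C^t / ε_t²` over positive `ε_t` with
`Σ_t ε_t = ε̄` is `ε_t* = ((C^{1/3}-1)/(C^{T/3}-1)) C^{t/3} ε̄`. -/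
theorem optimal_noise_allocation
    (A C εbar : ℝ) (hA : 0 < A) (hC0 : 0 < C) (hC1 : C < 1) (hεbar : 0 < εbar)
    (T : ℕ) (hT : 1 ≤ T)
    (εstar : Fin T → ℝ)
    (hεstar : ∀ t : Fin T,
      εstar t = (C ^ ((1 : ℝ) / 3) - 1) / (C ^ ((T : ℝ) / 3) - 1) *
        C ^ ((t : ℝ) / 3) * εbar) :
    (∀ t, 0 < εstar t) ∧ (∑ t, εstar t = εbar) ∧
      ∀ ε : Fin T → ℝ, (∀ t, 0 < ε t) → (∑ t, ε t = εbar) →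
        ∑ t : Fin T, A ^ 2 * C ^ (t : ℕ) / (εstar t) ^ 2 ≤
          ∑ t : Fin T, A ^ 2 * C ^ (t : ℕ) / (ε t) ^ 2 := by
  set r : ℝ := C ^ ((1 : ℝ) / 3) with hr
  have hr0 : 0 < r := Real.rpow_pos_of_pos hC0 _
  have hr1 : r < 1 := Real.rpow_lt_one hC0.le hC1 (by norm_num)
  have hrne : r ≠ 1 := ne_of_lt hr1
  have hpow : ∀ t : ℕ, C ^ ((t : ℝ) / 3) = r ^ t := by
    intro t
    rw [hr, ← Real.rpow_natCast (C ^ ((1:ℝ)/3)) t, ← Real.rpow_mul hC0.le]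
    congr 1
    ring
  have hr3 : r ^ (3 : ℕ) = C := by
    rw [hr, ← Real.rpow_natCast (C ^ ((1:ℝ)/3)) 3, ← Real.rpow_mul hC0.le]
    norm_num
  have hrT : r ^ T < 1 := pow_lt_one₀ hr0.le hr1 (by omega)
  set K : ℝ := (r - 1) / (r ^ T - 1) with hKdef
  have hK : 0 < K := div_pos_of_neg_of_neg (by linarith) (by linarith)
  have hε : ∀ t : Fin T, εstar t = K * r ^ (t : ℕ) * εbar := by
    intro t
    rw [hεstar t, hpow, hpow]
  have hpos : ∀ t : Fin T, 0 < εstar t := by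
    intro t
    rw [hε t]
    positivity
  have hsum : ∑ t, εstar t = εbar := by
    have hgeom : ∑ i ∈ Finset.range T, r ^ i = (r ^ T - 1) / (r - 1) :=
      geom_sum_eq hrne T
    calc ∑ t, εstar t = ∑ t : Fin T, K * r ^ (t : ℕ) * εbar := by
          exact Finset.sum_congr rfl fun t _ => hε t
      _ = K * εbar * ∑ i ∈ Finset.range T, r ^ i := by
          rw [Finset.mul_sum, ← Fin.sum_univ_eq_sum_range]
          exact Finset.sum_congr rfl fun t _ => by ring
      _ = εbar := by
          rw [hgeom, hKdef]
          have h1 : r - 1 ≠ 0 := by intro h; apply hrne; linarith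
          have h2 : r ^ T - 1 ≠ 0 := by intro h; nlinarith
          field_simp
  refine ⟨hpos, hsum, ?_⟩
  intro ε hεpos hεsum
  set μ : ℝ := A ^ 2 / (K ^ 3 * εbar ^ 3) with hμdef
  have hμpos : 0 < μ := by positivity
  have hcube : ∀ t : Fin T, (εstar t) ^ 3 = K ^ 3 * C ^ (t : ℕ) * εbar ^ 3 := by
    intro t
    rw [hε t, ← hr3]
    ring
  have hμ : ∀ t : Fin T, A ^ 2 * C ^ (t : ℕ) / (εstar t) ^ 3 = μ := by
    intro t
    rw [hcube t, hμdef]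
    have hCt : (0:ℝ) < C ^ (t : ℕ) := pow_pos hC0 _
    field_simp
  have hsq : ∀ t : Fin T, A ^ 2 * C ^ (t : ℕ) / (εstar t) ^ 2 = μ * εstar t := by
    intro t
    rw [← hμ t]
    have h := ne_of_gt (hpos t)
    field_simp
  have hsum2 : ∑ t : Fin T, A ^ 2 * C ^ (t : ℕ) / (εstar t) ^ 2 = μ * εbar := by
    rw [Finset.sum_congr rfl fun t _ => hsq t, ← Finset.mul_sum, hsum]
  rw [hsum2]
  have hbound : ∀ t : Fin T,
      3 * (μ * εstar t) - 2 * μ * ε t ≤ A ^ 2 * C ^ (t : ℕ) / (ε t) ^ 2 := by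
    intro t
    have h := tangent_ineq (A ^ 2 * C ^ (t : ℕ)) (ε t) (εstar t)
      (by positivity) (hεpos t) (hpos t)
    rw [hsq t] at h
    rw [hμ t] at h
    linarith
  calc μ * εbar = ∑ t : Fin T, (3 * (μ * εstar t) - 2 * μ * ε t) := by
        have h1 : ∑ t : Fin T, 3 * (μ * εstar t) = 3 * μ * εbar := by
          simp_rw [← mul_assoc]
          rw [← Finset.mul_sum, hsum]
        have h2 : ∑ t : Fin T, 2 * μ * ε t = 2 * μ * εbar := by
          rw [← Finset.mul_sum, hεsum]
        rw [Finset.sum_sub_distrib, h1, h2]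
        ring
    _ ≤ ∑ t : Fin T, A ^ 2 * C ^ (t : ℕ) / (ε t) ^ 2 :=
        Finset.sum_le_sum fun t _ => hbound t
end
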